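/- For real x with x ≠ 0, ±2, and all n ≥ 2, the derivative of the Oresme polynomial satisfies O_n'(x) = (x²(2n − x²)·O_n(x) − 2n·O_{n−2}(x)) / (x³(x² − 4)). -/

import Mathlib

noncomputable def oresme : ℕ → ℝ → ℝ
  | 0 => fun _ => 0
  | 1 => fun x => 1/x
  | (n+2) => fun x => oresme (n+1) x - (1/x^2) * oresme n x

lemma oresme_diff_pair (x : ℝ) (hx : x ≠ 0) :
    ∀ n, DifferentiableAt ℝ (oresme n) x ∧ DifferentiableAt ℝ (oresme (n+1)) x := by
  intro n
  induction n with
  | zero =>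
    constructor
    · simp [oresme]
    · have h1 : oresme 1 = fun y : ℝ => y⁻¹ := by funext y; simp [oresme, one_div]
      rw [h1]
      exact differentiableAt_inv hx
  | succ m ih =>
    refine ⟨ih.2, ?_⟩
    have h2 : oresme (m+2) = fun y : ℝ => oresme (m+1) y - (1/y^2) * oresme m y := by
      funext y; simp [oresme]
    rw [h2]
    have hinv : DifferentiableAt ℝ (fun y : ℝ => 1/y^2) x := by
      simp only [one_div]
      exact (differentiableAt_pow 2).inv (pow_ne_zero 2 hx)
    exact ih.2.sub (hinv.mul ih.1)

lemma oresme_diff (x : ℝ) (hx : x ≠ 0) (n : ℕ) : DifferentiableAt ℝ (oresme n) x :=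
  (oresme_diff_pair x hx n).1

lemma oresme_deriv_rec (x : ℝ) (hx : x ≠ 0) (n : ℕ) :
    deriv (oresme (n+2)) x = deriv (oresme (n+1)) x -
      ((-2/x^3) * oresme n x + (1/x^2) * deriv (oresme n) x) := by
  have h2 : oresme (n+2) = fun y : ℝ => oresme (n+1) y - (1/y^2) * oresme n y := by
    funext y; simp [oresme]
  have hinv : HasDerivAt (fun y : ℝ => 1/y^2) (-2/x^3) x := by
    have h := (hasDerivAt_pow 2 x).inv (pow_ne_zero 2 hx)
    simp only [one_div]
    refine h.congr_deriv ?_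
    field_simp
    ring
  have hO := (oresme_diff x hx n).hasDerivAt
  have hO1 := (oresme_diff x hx (n+1)).hasDerivAt
  have hsum := hO1.sub (hinv.mul hO)
  rw [h2]
  exact hsum.deriv

theorem oresme_deriv (x : ℝ) (hx : x ≠ 0) (hx2 : x ≠ 2) (hx2' : x ≠ -2)
    (n : ℕ) (hn : 2 ≤ n) :
    deriv (oresme n) x =
      (x^2 * (2*n - x^2) * oresme n x - 2*n * oresme (n-2) x) / (x^3 * (x^2 - 4)) := by
  have hx4 : x^2 - 4 ≠ 0 := by
    intro h
    have h2 : (x - 2) * (x + 2) = 0 := by nlinarith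
    rcases mul_eq_zero.mp h2 with h3 | h3
    · exact hx2 (by linarith)
    · exact hx2' (by linarith)
  have key : ∀ m : ℕ,
      (deriv (oresme (m+2)) x =
        (x^2 * (2*((m:ℝ)+2) - x^2) * oresme (m+2) x - 2*((m:ℝ)+2) * oresme m x) /
          (x^3 * (x^2 - 4))) ∧
      (deriv (oresme (m+3)) x =
        (x^2 * (2*((m:ℝ)+3) - x^2) * oresme (m+3) x - 2*((m:ℝ)+3) * oresme (m+1) x) /
          (x^3 * (x^2 - 4))) := by
    intro m
    induction m with
    | zero =>
      constructor
      · have h2 : oresme 2 = fun y : ℝ => y⁻¹ := by funext y; simp [oresme, one_div]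
        have hdv : deriv (oresme 2) x = -(x^2)⁻¹ := by
          rw [h2]; exact (hasDerivAt_inv hx).deriv
        rw [hdv]
        have hO2 : oresme 2 x = 1/x := by simp [oresme]
        have hO0 : oresme 0 x = 0 := by simp [oresme]
        rw [hO2, hO0]
        field_simp
        ring
      · have h3 : oresme 3 = fun y : ℝ => y⁻¹ - 1/y^2 * y⁻¹ := by
          funext y; simp [oresme, one_div]
        have hinv : HasDerivAt (fun y : ℝ => 1/y^2) (-2/x^3) x := by
          have h := (hasDerivAt_pow 2 x).inv (pow_ne_zero 2 hx)
          simp only [one_div]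
          refine h.congr_deriv ?_
          field_simp
          ring
        have hd := (hasDerivAt_inv hx).sub (hinv.mul (hasDerivAt_inv hx))
        have hdv : deriv (oresme 3) x =
            -(x^2)⁻¹ - (-2/x^3 * x⁻¹ + 1/x^2 * -(x^2)⁻¹) := by
          rw [h3]; exact hd.deriv
        rw [hdv]
        have hO1 : oresme 1 x = 1/x := by simp [oresme]
        have hO3 : oresme 3 x = 1/x - (1/x^2) * (1/x) := by simp [oresme]
        rw [hO1, hO3]
        field_simp
        ring
    | succ m ih =>
      have e1 : oresme (m+2) x = oresme (m+1) x - (1/x^2) * oresme m x := by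
        simp [oresme]
      have e2 : oresme (m+3) x = oresme (m+2) x - (1/x^2) * oresme (m+1) x := by
        simp [oresme]
      have e3 : oresme (m+2+2) x = oresme (m+3) x - (1/x^2) * oresme (m+2) x := by
        simp [oresme]
      constructor
      · rw [show m+1+2 = m+3 from rfl, ih.2]
        push_cast
        ring
      · rw [show m+1+3 = m+2+2 from rfl, oresme_deriv_rec x hx (m+2),
            show m+2+1 = m+3 from rfl, ih.2, ih.1, e3, e2, e1]
        push_cast
        field_simp
        ring
  obtain ⟨m, rfl⟩ : ∃ m, n = m + 2 := ⟨n - 2, by omega⟩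
  rw [show m + 2 - 2 = m from rfl, (key m).1]
  push_cast
  ring
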